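/- Let r > s ≥ 2, and let G be a bipartite graph with parts V1 (all vertices of degree r) and V2 (all vertices of degree s) and diameter at most 2m+1. Set ρ = r/gcd(r,s), σ = s/gcd(r,s), and N2' = 1 + s(r-1)·∑_{i=0}^{m-1}((r-1)(s-1))^i. Then |V2| ≤ ⌊N2'/ρ⌋·ρ and |V1| ≤ ⌊N2'/ρ⌋·σ, so the total order satisfies |V1|+|V2| ≤ ⌊N2'/ρ⌋·(ρ+σ). -/

import Mathlib

open Finset SimpleGraph in
lemma aux_parity {V : Type*} {G : SimpleGraph V} {V1 V2 : Finset V}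
    (hpart : ∀ v, (v ∈ V1 ∧ v ∉ V2) ∨ (v ∈ V2 ∧ v ∉ V1))
    (hbip : ∀ u v, G.Adj u v → (u ∈ V1 ∧ v ∈ V2) ∨ (u ∈ V2 ∧ v ∈ V1))
    {a b : V} (p : G.Walk a b) : ((a ∈ V2) ↔ (b ∈ V2)) ↔ Even p.length := by
  induction p with
  | nil => simp
  | @cons a c b h q ih =>
    have h1 : ¬ (a ∈ V2 ↔ c ∈ V2) := by
      rcases hbip a c h with ⟨ha, hc⟩ | ⟨ha, hc⟩ <;>
        rcases hpart a with hpa | hpa <;> rcases hpart c with hpc | hpc <;> tauto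
    simp only [SimpleGraph.Walk.length_cons, Nat.even_add_one]
    tauto

lemma aux_back {V : Type*} {G : SimpleGraph V} (hconn : G.Connected) (u v : V) (d : ℕ)
    (h : G.dist u v = d + 1) : ∃ w, G.Adj v w ∧ G.dist u w = d := by
  have h' : G.dist v u = d + 1 := by rwa [SimpleGraph.dist_comm]
  obtain ⟨p, hp⟩ := (hconn v u).exists_walk_length_eq_dist
  rw [h'] at hp
  cases p with
  | nil => simp at hp
  | @cons _ w _ hadj q =>
    refine ⟨w, hadj, ?_⟩
    have hq : q.length = d := by simpa using hp
    have h1 : G.dist w u ≤ d := hq ▸ SimpleGraph.dist_le q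
    have h2 : G.dist v u ≤ G.dist v w + G.dist w u := hconn.dist_triangle
    have h3 : G.dist v w = 1 := SimpleGraph.dist_eq_one_iff_adj.mpr hadj
    rw [SimpleGraph.dist_comm]
    omega

lemma aux_fiber {V : Type*} [Fintype V] [DecidableEq V] (G : SimpleGraph V)
    [DecidableRel G.Adj] (A : Finset V) :
    (Finset.univ.filter (fun p : V × V => G.Adj p.1 p.2 ∧ p.1 ∈ A)).card
      = ∑ v ∈ A, G.degree v := by
  rw [Finset.card_eq_sum_card_fiberwise (f := Prod.fst) (t := A)
    (fun p hp => (Finset.mem_filter.mp hp).2.2)]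
  refine Finset.sum_congr rfl fun v hv => ?_
  have : ((Finset.univ.filter (fun p : V × V => G.Adj p.1 p.2 ∧ p.1 ∈ A)).filter
      (fun p => p.1 = v)) = (G.neighborFinset v).image (fun w => (v, w)) := by
    ext ⟨p1, p2⟩
    simp only [Finset.mem_filter, Finset.mem_univ, true_and, Finset.mem_image,
      SimpleGraph.mem_neighborFinset]
    constructor
    · rintro ⟨⟨hadj, _⟩, rfl⟩
      exact ⟨p2, hadj, rfl⟩
    · rintro ⟨w, hadj, h⟩
      obtain ⟨rfl, rfl⟩ := Prod.mk.injEq .. ▸ h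
      exact ⟨⟨hadj, hv⟩, rfl⟩
  rw [this, Finset.card_image_of_injective _ (fun a b h => by injection h)]
  rfl

open Finset SimpleGraph


/-- Refined Moore bounds for bipartite biregular graphs of odd diameter
`2m+1` with degrees `r > s ≥ 2`.  With `ρ = r/gcd(r,s)`, `σ = s/gcd(r,s)` and
`N2' = 1 + s(r-1)·∑_{i=0}^{m-1}((r-1)(s-1))^i`, one has `|V2| ≤ ⌊N2'/ρ⌋·ρ`,
`|V1| ≤ ⌊N2'/ρ⌋·σ`, and `|V1|+|V2| ≤ ⌊N2'/ρ⌋·(ρ+σ)`. -/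
theorem stmt_3 {V : Type*} [Fintype V] (G : SimpleGraph V) (V1 V2 : Finset V)
    (hpart : ∀ v, (v ∈ V1 ∧ v ∉ V2) ∨ (v ∈ V2 ∧ v ∉ V1))
    (hbip : ∀ u v, G.Adj u v → (u ∈ V1 ∧ v ∈ V2) ∨ (u ∈ V2 ∧ v ∈ V1))
    (r s m : ℕ) (hs : 2 ≤ s) (hrs : s < r) (hm : 1 ≤ m)
    (hdeg1 : ∀ v ∈ V1, (G.neighborSet v).ncard = r)
    (hdeg2 : ∀ v ∈ V2, (G.neighborSet v).ncard = s)
    (hconn : G.Connected) (hdiam : G.diam ≤ 2 * m + 1) :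
    let ρ := r / Nat.gcd r s
    let σ := s / Nat.gcd r s
    let N2' := 1 + s * (r - 1) * ∑ i ∈ Finset.range m, ((r - 1) * (s - 1)) ^ i
    V2.card ≤ (N2' / ρ) * ρ ∧ V1.card ≤ (N2' / ρ) * σ ∧
      V1.card + V2.card ≤ (N2' / ρ) * (ρ + σ) := by
  classical
  intro ρ σ N2'
  have hρdef : ρ = r / Nat.gcd r s := rfl
  have hσdef : σ = s / Nat.gcd r s := rfl
  have hNdef : N2' = 1 + s * (r - 1) * ∑ i ∈ Finset.range m, ((r - 1) * (s - 1)) ^ i := rfl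
  -- degrees
  have hdegF : ∀ v : V, (G.neighborSet v).ncard = G.degree v := by
    intro v; rw [Set.ncard_eq_toFinset_card']; rfl
  have hd1 : ∀ v ∈ V1, G.degree v = r := fun v hv => by rw [← hdegF]; exact hdeg1 v hv
  have hd2 : ∀ v ∈ V2, G.degree v = s := fun v hv => by rw [← hdegF]; exact hdeg2 v hv
  -- handle empty V2
  by_cases hV2ne : V2.Nonempty
  case neg =>
    have hV2e : V2 = ∅ := Finset.not_nonempty_iff_eq_empty.mp hV2ne
    have hV1e : V1 = ∅ := by
      by_contra h
      obtain ⟨v, hv⟩ := Finset.nonempty_iff_ne_empty.mpr h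
      have hdv : 0 < G.degree v := by rw [hd1 v hv]; omega
      obtain ⟨w, hw⟩ := Finset.card_pos.mp hdv
      rw [SimpleGraph.mem_neighborFinset] at hw
      rcases hbip v w hw with ⟨_, h2⟩ | ⟨h2, _⟩ <;> simp [hV2e] at h2
    simp [hV1e, hV2e]
  case pos =>
  obtain ⟨u, hu⟩ := hV2ne
  -- edge double count
  have hcount : r * V1.card = s * V2.card := by
    have h1 := aux_fiber G V1
    have h2 := aux_fiber G V2
    have hswap : (Finset.univ.filter (fun p : V × V => G.Adj p.1 p.2 ∧ p.1 ∈ V1)).card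
        = (Finset.univ.filter (fun p : V × V => G.Adj p.1 p.2 ∧ p.1 ∈ V2)).card := by
      refine Finset.card_nbij' Prod.swap Prod.swap ?_ ?_ (fun p _ => Prod.swap_swap p) (fun p _ => Prod.swap_swap p)
      · rintro ⟨p1, p2⟩ hp
        simp only [Finset.mem_coe, Finset.mem_filter, Finset.mem_univ, true_and, Prod.swap] at hp ⊢
        obtain ⟨hadj, hp1⟩ := hp
        refine ⟨hadj.symm, ?_⟩
        rcases hbip p1 p2 hadj with ⟨_, h2⟩ | ⟨h2, _⟩
        · exact h2
        · rcases hpart p1 with ⟨_, hn⟩ | ⟨_, hn⟩ <;> tauto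
      · rintro ⟨p1, p2⟩ hp
        simp only [Finset.mem_coe, Finset.mem_filter, Finset.mem_univ, true_and, Prod.swap] at hp ⊢
        obtain ⟨hadj, hp1⟩ := hp
        refine ⟨hadj.symm, ?_⟩
        rcases hbip p1 p2 hadj with ⟨h2, _⟩ | ⟨_, h2⟩
        · rcases hpart p1 with ⟨_, hn⟩ | ⟨_, hn⟩ <;> tauto
        · exact h2
    have e1 : ∑ v ∈ V1, G.degree v = r * V1.card := by
      rw [Finset.sum_congr rfl hd1, Finset.sum_const, smul_eq_mul, mul_comm]
    have e2 : ∑ v ∈ V2, G.degree v = s * V2.card := by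
      rw [Finset.sum_congr rfl hd2, Finset.sum_const, smul_eq_mul, mul_comm]
    rw [← e1, ← e2, ← h1, ← h2, hswap]
  -- distance spheres
  set S : ℕ → Finset V := fun d => Finset.univ.filter (fun v => G.dist u v = d) with hS
  have hSmem : ∀ d v, v ∈ S d ↔ G.dist u v = d := by intro d v; simp [hS]
  have hparity : ∀ v : V, v ∈ V2 ↔ Even (G.dist u v) := by
    intro v
    obtain ⟨p, hp⟩ := (hconn u v).exists_walk_length_eq_dist
    rw [← hp]
    have := aux_parity hpart hbip p
    tauto
  have hS0 : S 0 = {u} := by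
    ext v
    simp [hSmem, hconn.dist_eq_zero_iff, Finset.mem_singleton, eq_comm]
  have hdegS : ∀ d v, v ∈ S d → G.degree v = if Even d then s else r := by
    intro d v hv
    rw [hSmem] at hv
    have hv2 : v ∈ V2 ↔ Even d := by rw [hparity, hv]
    by_cases hd : Even d
    · simp only [hd, if_true]; exact hd2 v (hv2.mpr hd)
    · simp only [hd, if_false]
      rcases hpart v with ⟨h1, _⟩ | ⟨h1, _⟩
      · exact hd1 v h1
      · exact absurd (hv2.mp h1) hd
  have hstep : ∀ d, 1 ≤ d →
      (S (d+1)).card ≤ (S d).card * ((if Even d then s else r) - 1) := by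
    intro d hd
    have hsub : S (d+1) ⊆ (S d).biUnion (fun v => G.neighborFinset v ∩ S (d+1)) := by
      intro w hw
      have hw' := (hSmem _ w).mp hw
      obtain ⟨x, hadj, hx⟩ := aux_back hconn u w d hw'
      rw [Finset.mem_biUnion]
      exact ⟨x, (hSmem d x).mpr hx,
        Finset.mem_inter.mpr ⟨(SimpleGraph.mem_neighborFinset G x w).mpr hadj.symm, hw⟩⟩
    calc (S (d+1)).card ≤ ((S d).biUnion (fun v => G.neighborFinset v ∩ S (d+1))).card :=
          Finset.card_le_card hsub
      _ ≤ ∑ v ∈ S d, (G.neighborFinset v ∩ S (d+1)).card := Finset.card_biUnion_le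
      _ ≤ ∑ _v ∈ S d, ((if Even d then s else r) - 1) := by
          apply Finset.sum_le_sum
          intro v hv
          obtain ⟨e, rfl⟩ : ∃ e, d = e + 1 := ⟨d - 1, by omega⟩
          have hvd := (hSmem _ v).mp hv
          obtain ⟨x, hadj, hx⟩ := aux_back hconn u v e hvd
          have hxmem : x ∈ G.neighborFinset v := (SimpleGraph.mem_neighborFinset G v x).mpr hadj
          have hsub2 : G.neighborFinset v ∩ S (e+1+1) ⊆ (G.neighborFinset v).erase x := by
            intro y hy
            rw [Finset.mem_inter] at hy
            refine Finset.mem_erase.mpr ⟨?_, hy.1⟩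
            rintro rfl
            have h2 := (hSmem _ y).mp hy.2
            omega
          calc (G.neighborFinset v ∩ S (e+1+1)).card
              ≤ ((G.neighborFinset v).erase x).card := Finset.card_le_card hsub2
            _ = G.degree v - 1 := by rw [Finset.card_erase_of_mem hxmem]; rfl
            _ = (if Even (e+1) then s else r) - 1 := by rw [hdegS _ v hv]
      _ = (S d).card * ((if Even d then s else r) - 1) := by
          rw [Finset.sum_const, smul_eq_mul]
  have hS1 : (S 1).card ≤ s := by
    have hsub : S 1 ⊆ G.neighborFinset u := by
      intro v hv
      exact (SimpleGraph.mem_neighborFinset G u v).mpr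
        (SimpleGraph.dist_eq_one_iff_adj.mp ((hSmem _ v).mp hv))
    calc (S 1).card ≤ (G.neighborFinset u).card := Finset.card_le_card hsub
      _ = s := hd2 u hu
  have hSeven : ∀ k : ℕ, (S (2*(k+1))).card ≤ s * (r-1) * ((r-1)*(s-1))^k := by
    intro k
    induction k with
    | zero =>
      have h1 := hstep 1 le_rfl
      simp only [Nat.not_even_one, if_false] at h1
      have : (S 2).card ≤ s * (r - 1) :=
        le_trans h1 (Nat.mul_le_mul_right _ hS1)
      simpa using this
    | succ n ih =>
      have heven2n : Even (2*(n+1)) := even_two_mul _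
      have hodd := hstep (2*(n+1)) (by omega)
      have hodd2 : ¬ Even (2*(n+1)+1) := by simp [Nat.even_add_one, heven2n]
      have heven := hstep (2*(n+1)+1) (by omega)
      simp only [heven2n, if_true] at hodd
      simp only [hodd2, if_false] at heven
      have key : (S (2*(n+1)+1+1)).card ≤ (S (2*(n+1))).card * (s-1) * (r-1) :=
        le_trans heven (Nat.mul_le_mul_right _ hodd)
      have h2 : 2*(n+1+1) = 2*(n+1)+1+1 := by omega
      rw [h2]
      calc (S (2*(n+1)+1+1)).card ≤ (S (2*(n+1))).card * (s-1) * (r-1) := key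
        _ ≤ s * (r-1) * ((r-1)*(s-1))^n * (s-1) * (r-1) := by
            exact Nat.mul_le_mul_right _ (Nat.mul_le_mul_right _ ih)
        _ = s * (r-1) * ((r-1)*(s-1))^(n+1) := by ring
  -- ediam finite
  have : Nonempty V := ⟨u⟩
  obtain ⟨a, b, hab⟩ := SimpleGraph.exists_edist_eq_ediam_of_finite (G := G)
  have hne_top : G.ediam ≠ ⊤ := by
    rw [← hab]; exact (SimpleGraph.edist_ne_top_iff_reachable).mpr (hconn a b)
  -- cover V2
  have hcover : V2 ⊆ (Finset.range (m+1)).biUnion (fun k => S (2*k)) := by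
    intro v hv
    have he : Even (G.dist u v) := (hparity v).mp hv
    have hle : G.dist u v ≤ 2*m+1 := le_trans (SimpleGraph.dist_le_diam hne_top) hdiam
    obtain ⟨k, hk⟩ := he
    rw [Finset.mem_biUnion]
    exact ⟨k, Finset.mem_range.mpr (by omega), (hSmem _ v).mpr (by omega)⟩
  have hV2le : V2.card ≤ N2' := by
    calc V2.card ≤ ((Finset.range (m+1)).biUnion (fun k => S (2*k))).card :=
          Finset.card_le_card hcover
      _ ≤ ∑ k ∈ Finset.range (m+1), (S (2*k)).card := Finset.card_biUnion_le
      _ = (∑ j ∈ Finset.range m, (S (2*(j+1))).card) + (S 0).card := by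
          rw [Finset.sum_range_succ']
      _ ≤ (∑ j ∈ Finset.range m, s * (r-1) * ((r-1)*(s-1))^j) + 1 := by
          refine add_le_add (Finset.sum_le_sum fun j _ => hSeven j) ?_
          rw [hS0]; simp
      _ = N2' := by rw [hNdef, ← Finset.mul_sum]; omega
  -- arithmetic
  have hg0 : 0 < Nat.gcd r s := Nat.gcd_pos_of_pos_left _ (by omega)
  have hρ : ρ * Nat.gcd r s = r := Nat.div_mul_cancel (Nat.gcd_dvd_left r s)
  have hσ : σ * Nat.gcd r s = s := Nat.div_mul_cancel (Nat.gcd_dvd_right r s)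
  have hcop : Nat.Coprime ρ σ := Nat.coprime_div_gcd_div_gcd hg0
  have hρσ : ρ * V1.card = σ * V2.card := by
    have h : (ρ * V1.card) * Nat.gcd r s = (σ * V2.card) * Nat.gcd r s := by
      calc (ρ * V1.card) * Nat.gcd r s = r * V1.card := by rw [mul_right_comm, hρ]
        _ = s * V2.card := hcount
        _ = (σ * V2.card) * Nat.gcd r s := by rw [mul_right_comm, hσ]
    exact Nat.eq_of_mul_eq_mul_right hg0 h
  have hρpos : 0 < ρ := Nat.div_pos (Nat.le_of_dvd (by omega) (Nat.gcd_dvd_left r s)) hg0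
  have hdvd : ρ ∣ V2.card :=
    (Nat.Coprime.dvd_of_dvd_mul_left hcop) ⟨V1.card, hρσ.symm⟩
  obtain ⟨k, hk⟩ := hdvd
  have hkle : k ≤ N2' / ρ := by
    rw [Nat.le_div_iff_mul_le hρpos]
    calc k * ρ = ρ * k := mul_comm _ _
      _ = V2.card := hk.symm
      _ ≤ N2' := hV2le
  have hV1 : V1.card = σ * k := by
    have h : ρ * V1.card = ρ * (σ * k) := by
      rw [hρσ, hk]; ring
    exact Nat.eq_of_mul_eq_mul_left hρpos h
  have b2 : V2.card ≤ (N2' / ρ) * ρ := by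
    rw [hk, mul_comm]
    exact Nat.mul_le_mul_right _ hkle
  have b1 : V1.card ≤ (N2' / ρ) * σ := by
    rw [hV1, mul_comm]
    exact Nat.mul_le_mul_right _ hkle
  refine ⟨b2, b1, ?_⟩
  calc V1.card + V2.card ≤ (N2' / ρ) * σ + (N2' / ρ) * ρ := add_le_add b1 b2
    _ = (N2' / ρ) * (ρ + σ) := by ring
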